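/- Let c > 0 and let X be a random variable with density f_c(ρ) = (c/(2√π))·ρ^{−3/2}·exp(−c²/(4ρ)) on (0,∞); let h and h̃ be exponential random variables with rate λ > 0, with X, h, h̃ mutually independent. Let d, σ², τ_B, τ_H, δ, β > 0, μ > 0, 0 < ϱ < 1, 0 < ω < 1, ρ_B > 0, ρ_H > 0, and set a = ρ_B/(βϱ), b = ρ_H/(ωβ), ν_B = δ·X·(1−ϱ)·h/(d^μ σ²), and ν_H = ((ωβX − ρ_H)/(1−ω))·h̃·d^{−μ}/σ² on the event ωβX > ρ_H. Define C_PTP = P[X ≤ b]·P[ν_B > τ_B and βϱX > ρ_B] + P[X > b]·P[ν_H > τ_H and ωβX > ρ_H]. Then C_PTP = erfc(c/(2√b))·∫_a^∞ exp(−λ τ_B d^μ σ²/(δρ(1−ϱ)))·f_c(ρ) dρ + (1 − erfc(c/(2√b)))·∫_b^∞ exp(−λ τ_H d^μ σ² (1−ω)/(ωβρ − ρ_H))·f_c(ρ) dρ. -/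

import Mathlib

open MeasureTheory ProbabilityTheory Set

/-- The complementary error function `erfc(x) = (2/√π)·∫_x^∞ exp(−t²) dt`. -/
noncomputable def erfc (x : ℝ) : ℝ :=
  (2 / Real.sqrt Real.pi) * ∫ t in Ioi x, Real.exp (-t ^ 2)

/-- The Lévy-type density on `(0,∞)`: `f_c(ρ) = (c/(2√π))·ρ^{−3/2}·exp(−c²/(4ρ))`. -/
noncomputable def levyDensity (c ρ : ℝ) : ℝ :=
  c / (2 * Real.sqrt Real.pi) * ρ ^ (-(3 : ℝ) / 2) * Real.exp (-(c ^ 2 / (4 * ρ)))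

section Aux

open Real
open scoped ENNReal

lemma measurable_levyDensity (c : ℝ) : Measurable (levyDensity c) := by
  unfold levyDensity; fun_prop

lemma levyDensity_pos {c ρ : ℝ} (hc : 0 < c) (hρ : 0 < ρ) : 0 < levyDensity c ρ := by
  unfold levyDensity
  have h1 : (0:ℝ) < Real.sqrt Real.pi := Real.sqrt_pos.mpr Real.pi_pos
  have h2 : (0:ℝ) < ρ ^ (-(3:ℝ)/2) := Real.rpow_pos_of_pos hρ _
  positivity

lemma expMeasure_Ioi' {r s : ℝ} (hr : 0 < r) (hs : 0 ≤ s) :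
    expMeasure r (Ioi s) = ENNReal.ofReal (Real.exp (-(r * s))) := by
  have hprob := isProbabilityMeasure_expMeasure hr
  have hIic : expMeasure r (Iic s) = ENNReal.ofReal (1 - Real.exp (-(r * s))) := by
    have h1 : expMeasure r (Iic s) = ∫⁻ y in Iic s, exponentialPDF r y := by
      rw [expMeasure, gammaMeasure, withDensity_apply _ measurableSet_Iic]; rfl
    rw [h1, lintegral_exponentialPDF_eq_antiDeriv hr, if_pos hs]
  have hle : Real.exp (-(r*s)) ≤ 1 := Real.exp_le_one_iff.mpr (by nlinarith)
  have hadd : (1 : ℝ≥0∞) = ENNReal.ofReal (Real.exp (-(r*s))) + ENNReal.ofReal (1 - Real.exp (-(r * s))) := by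
    rw [← ENNReal.ofReal_add (Real.exp_pos _).le (by linarith)]
    norm_num
  have hS : Ioi s = (Iic s)ᶜ := compl_Iic.symm
  rw [hS, measure_compl measurableSet_Iic (measure_ne_top _ _), measure_univ, hIic]
  exact ENNReal.sub_eq_of_eq_add ENNReal.ofReal_ne_top hadd

variable {Θ : Type*} [MeasurableSpace Θ]

lemma levy_lintegral_one (P : Measure Θ) [IsProbabilityMeasure P] {c : ℝ}
    (X : Θ → ℝ) (hXm : Measurable X)
    (hXlaw : Measure.map X P =
      (volume.restrict (Ioi (0 : ℝ))).withDensity fun ρ => ENNReal.ofReal (levyDensity c ρ)) :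
    ∫⁻ ρ in Ioi (0:ℝ), ENNReal.ofReal (levyDensity c ρ) = 1 := by
  haveI : IsProbabilityMeasure (Measure.map X P) := Measure.isProbabilityMeasure_map hXm.aemeasurable
  have := measure_univ (μ := Measure.map X P)
  rw [hXlaw, withDensity_apply _ MeasurableSet.univ, Measure.restrict_univ] at this
  exact this

lemma levy_integrableOn (P : Measure Θ) [IsProbabilityMeasure P] {c : ℝ} (hc : 0 < c)
    (X : Θ → ℝ) (hXm : Measurable X)
    (hXlaw : Measure.map X P =
      (volume.restrict (Ioi (0 : ℝ))).withDensity fun ρ => ENNReal.ofReal (levyDensity c ρ))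
    {t : ℝ} (ht : 0 ≤ t) : IntegrableOn (levyDensity c) (Ioi t) := by
  refine ⟨(measurable_levyDensity c).aestronglyMeasurable, ?_⟩
  have hpos : ∀ᵐ ρ ∂(volume.restrict (Ioi t)), 0 ≤ levyDensity c ρ := by
    refine (ae_restrict_iff' measurableSet_Ioi).mpr (ae_of_all _ fun ρ hρ => ?_)
    exact (levyDensity_pos hc (lt_of_le_of_lt ht hρ)).le
  rw [hasFiniteIntegral_iff_ofReal hpos]
  calc ∫⁻ ρ in Ioi t, ENNReal.ofReal (levyDensity c ρ)
      ≤ ∫⁻ ρ in Ioi (0:ℝ), ENNReal.ofReal (levyDensity c ρ) :=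
        lintegral_mono_set (Ioi_subset_Ioi ht)
    _ = 1 := levy_lintegral_one P X hXm hXlaw
    _ < ⊤ := ENNReal.one_lt_top

lemma prob_event_eq (P : Measure Θ) [IsProbabilityMeasure P] {c lam : ℝ} (hc : 0 < c)
    (hlam : 0 < lam) (X Y : Θ → ℝ) (hXm : Measurable X) (hYm : Measurable Y)
    (hXlaw : Measure.map X P =
      (volume.restrict (Ioi (0 : ℝ))).withDensity fun ρ => ENNReal.ofReal (levyDensity c ρ))
    (hYlaw : Measure.map Y P = expMeasure lam)
    (hind : IndepFun X Y P)
    (t : ℝ) (ht : 0 ≤ t) (s : ℝ → ℝ) (hs : Measurable s) (hs0 : ∀ ρ, t < ρ → 0 ≤ s ρ) :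
    (P {x | t < X x ∧ s (X x) < Y x}).toReal
      = ∫ ρ in Ioi t, Real.exp (-(lam * s ρ)) * levyDensity c ρ := by
  haveI : IsProbabilityMeasure (Measure.map X P) := Measure.isProbabilityMeasure_map hXm.aemeasurable
  haveI : IsProbabilityMeasure (Measure.map Y P) := Measure.isProbabilityMeasure_map hYm.aemeasurable
  have hS : MeasurableSet {p : ℝ × ℝ | t < p.1 ∧ s p.1 < p.2} :=
    (measurableSet_lt measurable_const measurable_fst).inter
      (measurableSet_lt (hs.comp measurable_fst) measurable_snd)
  have hmap := (indepFun_iff_map_prod_eq_prod_map_map hXm.aemeasurable hYm.aemeasurable).mp hind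
  have h1 : P {x | t < X x ∧ s (X x) < Y x}
      = ((Measure.map X P).prod (Measure.map Y P)) {p : ℝ × ℝ | t < p.1 ∧ s p.1 < p.2} := by
    rw [← hmap, Measure.map_apply (hXm.prodMk hYm) hS]; rfl
  have h2 : ∀ ρ : ℝ, (Measure.map Y P) (Prod.mk ρ ⁻¹' {p : ℝ × ℝ | t < p.1 ∧ s p.1 < p.2})
      = (Ioi t).indicator (fun ρ => ENNReal.ofReal (Real.exp (-(lam * s ρ)))) ρ := by
    intro ρ
    by_cases hρ : t < ρ
    · have hpre : Prod.mk ρ ⁻¹' {p : ℝ × ℝ | t < p.1 ∧ s p.1 < p.2} = Ioi (s ρ) := by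
        ext y; simp [hρ]
      rw [hpre, hYlaw, expMeasure_Ioi' hlam (hs0 ρ hρ)]
      exact (Set.indicator_of_mem (mem_Ioi.mpr hρ) fun ρ => ENNReal.ofReal (Real.exp (-(lam * s ρ)))).symm
    · have hpre : Prod.mk ρ ⁻¹' {p : ℝ × ℝ | t < p.1 ∧ s p.1 < p.2} = ∅ := by
        ext y; simp [hρ]
      rw [hpre, measure_empty]
      exact (Set.indicator_of_notMem (fun hm => hρ (mem_Ioi.mp hm)) fun ρ => ENNReal.ofReal (Real.exp (-(lam * s ρ)))).symm
  have hGmeas : Measurable fun ρ => Real.exp (-(lam * s ρ)) * levyDensity c ρ := by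
    exact (Real.measurable_exp.comp ((hs.const_mul lam).neg)).mul (measurable_levyDensity c)
  have hGint : IntegrableOn (fun ρ => Real.exp (-(lam * s ρ)) * levyDensity c ρ) (Ioi t) := by
    refine (levy_integrableOn P hc X hXm hXlaw ht).mono' hGmeas.aestronglyMeasurable ?_
    refine (ae_restrict_iff' measurableSet_Ioi).mpr (ae_of_all _ fun ρ hρ => ?_)
    have h3 : Real.exp (-(lam * s ρ)) ≤ 1 := by
      refine Real.exp_le_one_iff.mpr ?_
      have := hs0 ρ hρ; nlinarith
    have h4 : 0 < levyDensity c ρ := levyDensity_pos hc (lt_of_le_of_lt ht hρ)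
    rw [Real.norm_eq_abs, abs_mul, abs_of_pos (Real.exp_pos _), abs_of_pos h4]
    nlinarith [Real.exp_pos (-(lam * s ρ))]
  have hGnn : 0 ≤ᵐ[volume.restrict (Ioi t)] fun ρ => Real.exp (-(lam * s ρ)) * levyDensity c ρ := by
    refine (ae_restrict_iff' measurableSet_Ioi).mpr (ae_of_all _ fun ρ hρ => ?_)
    exact mul_nonneg (Real.exp_pos _).le (levyDensity_pos hc (lt_of_le_of_lt ht hρ)).le
  rw [h1, Measure.prod_apply hS]
  simp_rw [h2]
  rw [lintegral_indicator measurableSet_Ioi _, hXlaw]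
  have h5 : ∫⁻ ρ in Ioi t, ENNReal.ofReal (Real.exp (-(lam * s ρ)))
        ∂((volume.restrict (Ioi (0:ℝ))).withDensity fun ρ => ENNReal.ofReal (levyDensity c ρ))
      = ∫⁻ ρ in Ioi t, ENNReal.ofReal (Real.exp (-(lam * s ρ)) * levyDensity c ρ) := by
    rw [restrict_withDensity measurableSet_Ioi,
      lintegral_withDensity_eq_lintegral_mul _ ((measurable_levyDensity c).ennreal_ofReal)
        (show Measurable fun ρ => ENNReal.ofReal (Real.exp (-(lam * s ρ))) from ((hs.const_mul lam).neg.exp).ennreal_ofReal),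
      Measure.restrict_restrict measurableSet_Ioi,
      inter_eq_left.mpr (Ioi_subset_Ioi ht)]
    refine lintegral_congr fun ρ => ?_
    simp only [Pi.mul_apply]
    rw [mul_comm, ← ENNReal.ofReal_mul (Real.exp_pos _).le]
  rw [h5, ← ofReal_integral_eq_lintegral_ofReal hGint hGnn,
    ENNReal.toReal_ofReal (integral_nonneg_of_ae hGnn)]

lemma levy_integral_Ioo {c b : ℝ} (hc : 0 < c) (hb : 0 < b) :
    ∫ ρ in Ioo 0 b, levyDensity c ρ = erfc (c / (2 * Real.sqrt b)) := by
  set x₀ : ℝ := c / (2 * Real.sqrt b) with hx₀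
  have hsb : 0 < Real.sqrt b := Real.sqrt_pos.mpr hb
  have hx₀pos : 0 < x₀ := by positivity
  have himg : (fun t : ℝ => c ^ 2 / (4 * t ^ 2)) '' Ioi x₀ = Ioo 0 b := by
    ext y
    constructor
    · rintro ⟨t, ht, rfl⟩
      have ht0 : 0 < t := lt_trans hx₀pos ht
      constructor
      · positivity
      · have h1 : c ^ 2 / (4 * t ^ 2) < c ^ 2 / (4 * x₀ ^ 2) := by
          apply div_lt_div_of_pos_left (by positivity) (by positivity)
          have htx : x₀ < t := ht
          nlinarith
        have h2 : c ^ 2 / (4 * x₀ ^ 2) = b := by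
          rw [hx₀]
          rw [div_pow, mul_pow, Real.sq_sqrt hb.le]
          field_simp
          ring
        linarith
    · rintro ⟨hy0, hyb⟩
      refine ⟨c / (2 * Real.sqrt y), ?_, ?_⟩
      · have hsy : 0 < Real.sqrt y := Real.sqrt_pos.mpr hy0
        rw [mem_Ioi, hx₀]
        apply div_lt_div_of_pos_left (by positivity) (by positivity)
        have := Real.sqrt_lt_sqrt hy0.le hyb
        nlinarith
      · have hsy : 0 < Real.sqrt y := Real.sqrt_pos.mpr hy0
        show c ^ 2 / (4 * (c / (2 * Real.sqrt y)) ^ 2) = y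
        rw [div_pow, mul_pow, Real.sq_sqrt hy0.le]
        field_simp
        ring
  have hderiv : ∀ t ∈ Ioi x₀, HasDerivWithinAt (fun t : ℝ => c ^ 2 / (4 * t ^ 2))
      (-(c ^ 2 / 2) / t ^ 3) (Ioi x₀) t := by
    intro t ht
    have ht0 : t ≠ 0 := (lt_trans hx₀pos ht).ne'
    have : HasDerivAt (fun t : ℝ => c ^ 2 / (4 * t ^ 2)) (-(c ^ 2 / 2) / t ^ 3) t := by
      have h := (hasDerivAt_pow 2 t).const_mul (4 : ℝ)
      have h2 : HasDerivAt (fun t : ℝ => c ^ 2 / (4 * t ^ 2))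
          (-(c ^ 2) * (4 * (2 * t ^ 1)) / (4 * t ^ 2) ^ 2) t := by
        simpa using (hasDerivAt_const t (c^2)).fun_div h (by positivity)
      convert h2 using 1
      field_simp
      ring
    exact this.hasDerivWithinAt
  have hinj : InjOn (fun t : ℝ => c ^ 2 / (4 * t ^ 2)) (Ioi x₀) := by
    intro t1 h1 t2 h2 he
    simp only at he
    have ht1 : 0 < t1 := lt_trans hx₀pos h1
    have ht2 : 0 < t2 := lt_trans hx₀pos h2
    have hc2 : (0:ℝ) < c ^ 2 := by positivity
    have : t1 ^ 2 = t2 ^ 2 := by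
      field_simp at he
      nlinarith
    nlinarith
  have key := integral_image_eq_integral_abs_deriv_smul measurableSet_Ioi hderiv hinj (levyDensity c)
  rw [himg] at key
  rw [key]
  have hptwise : ∀ t ∈ Ioi x₀, |(-(c ^ 2 / 2) / t ^ 3)| • levyDensity c (c ^ 2 / (4 * t ^ 2))
      = (2 / Real.sqrt Real.pi) * Real.exp (-t ^ 2) := by
    intro t ht
    have ht0 : 0 < t := lt_trans hx₀pos ht
    have hsp : 0 < Real.sqrt Real.pi := Real.sqrt_pos.mpr Real.pi_pos
    have habs : |(-(c ^ 2 / 2) / t ^ 3)| = c ^ 2 / 2 / t ^ 3 := by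
      rw [abs_div, abs_neg, abs_of_pos (by positivity : (0:ℝ) < c^2/2), abs_of_pos (by positivity)]
    have harg : c ^ 2 / (4 * (c ^ 2 / (4 * t ^ 2))) = t ^ 2 := by
      field_simp
    have hrpow : (c ^ 2 / (4 * t ^ 2)) ^ (-(3:ℝ)/2) = ((2*t)/c) ^ (3:ℕ) := by
      have hbase : c ^ 2 / (4 * t ^ 2) = (c / (2*t)) ^ (2:ℕ) := by
        rw [div_pow, mul_pow]; norm_num
      rw [hbase, ← Real.rpow_natCast (c/(2*t)) 2, ← Real.rpow_mul (by positivity)]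
      have he : ((2:ℕ):ℝ) * (-(3:ℝ)/2) = ((-3 : ℤ) : ℝ) := by norm_num
      rw [he, Real.rpow_intCast, zpow_neg, ← inv_zpow, inv_div]
      rw [show ((3:ℤ)) = ((3:ℕ):ℤ) from rfl, zpow_natCast]
    unfold levyDensity
    rw [smul_eq_mul, habs, harg, hrpow]
    have hc0 : c ≠ 0 := hc.ne'
    have ht0' : t ≠ 0 := ht0.ne'
    field_simp
  rw [setIntegral_congr_fun measurableSet_Ioi hptwise, integral_const_mul]
  rfl

lemma prob_Iic (P : Measure Θ) [IsProbabilityMeasure P] {c : ℝ} (hc : 0 < c)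
    (X : Θ → ℝ) (hXm : Measurable X)
    (hXlaw : Measure.map X P =
      (volume.restrict (Ioi (0 : ℝ))).withDensity fun ρ => ENNReal.ofReal (levyDensity c ρ))
    {b : ℝ} (hb : 0 < b) :
    (P {x | X x ≤ b}).toReal = erfc (c / (2 * Real.sqrt b)) := by
  have hset : {x | X x ≤ b} = X ⁻¹' Iic b := rfl
  have hIocnn : ∀ ρ ∈ Ioc (0:ℝ) b, 0 ≤ levyDensity c ρ := fun ρ hρ => (levyDensity_pos hc hρ.1).le
  have hint : IntegrableOn (levyDensity c) (Ioc 0 b) :=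
    (levy_integrableOn P hc X hXm hXlaw le_rfl).mono_set Ioc_subset_Ioi_self
  have h1 : P {x | X x ≤ b} = ENNReal.ofReal (∫ ρ in Ioc 0 b, levyDensity c ρ) := by
    rw [hset, ← Measure.map_apply hXm measurableSet_Iic, hXlaw,
      withDensity_apply _ measurableSet_Iic, Measure.restrict_restrict measurableSet_Iic]
    have h2 : Iic b ∩ Ioi 0 = Ioc 0 b := by ext y; simp [mem_Ioc, and_comm]
    rw [h2, ofReal_integral_eq_lintegral_ofReal hint
      ((ae_restrict_iff' measurableSet_Ioc).mpr (ae_of_all _ hIocnn))]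
  rw [h1, ENNReal.toReal_ofReal (setIntegral_nonneg measurableSet_Ioc hIocnn),
    integral_Ioc_eq_integral_Ioo, levy_integral_Ioo hc hb]

lemma prob_gt (P : Measure Θ) [IsProbabilityMeasure P]
    (X : Θ → ℝ) (hXm : Measurable X) (b : ℝ) :
    (P {x | X x > b}).toReal = 1 - (P {x | X x ≤ b}).toReal := by
  have hset : {x | X x > b} = {x | X x ≤ b}ᶜ := by ext x; simp [not_le]
  have hmeas : MeasurableSet {x | X x ≤ b} := hXm measurableSet_Iic
  rw [hset, measure_compl hmeas (measure_ne_top _ _), measure_univ,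
    ENNReal.toReal_sub_of_le prob_le_one ENNReal.one_ne_top, ENNReal.toReal_one]

end Aux

set_option maxHeartbeats 1000000 in
/-- Coverage probability under PTP (interference-free case) in the
PPP/Rayleigh/μ=4 special case: with `X` of density `f_c` on `(0,∞)`, `h` and `h̃`
exponential with rate `λ`, `X, h, h̃` mutually independent, `a = ρ_B/(βϱ)`,
`b = ρ_H/(ωβ)`, `ν_B = δ·X·(1−ϱ)·h/(d^μ σ²)` and
`ν_H = ((ωβX − ρ_H)/(1−ω))·h̃·d^{−μ}/σ²`,
`C_PTP = P[X ≤ b]·P[ν_B > τ_B and βϱX > ρ_B] + P[X > b]·P[ν_H > τ_H and ωβX > ρ_H]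
 = erfc(c/(2√b))·∫_a^∞ exp(−λτ_B d^μ σ²/(δρ(1−ϱ)))·f_c(ρ) dρ
   + (1 − erfc(c/(2√b)))·∫_b^∞ exp(−λτ_H d^μ σ²(1−ω)/(ωβρ − ρ_H))·f_c(ρ) dρ`. -/
theorem coverage_probability_PTP {Θ : Type*} [MeasurableSpace Θ]
    (P : Measure Θ) [IsProbabilityMeasure P]
    (c : ℝ) (hc : 0 < c) (X h ht : Θ → ℝ)
    (hXm : Measurable X) (hhm : Measurable h) (hhtm : Measurable ht)
    (lam : ℝ) (hlam : 0 < lam)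
    (hXlaw : Measure.map X P =
      (volume.restrict (Ioi (0 : ℝ))).withDensity fun ρ => ENNReal.ofReal (levyDensity c ρ))
    (hhlaw : Measure.map h P = expMeasure lam)
    (hhtlaw : Measure.map ht P = expMeasure lam)
    (hind : iIndepFun (m := fun _ : Fin 3 => (inferInstance : MeasurableSpace ℝ)) ![X, h, ht] P)
    (d σ2 τB τH δ β μ ϱ ω ρB ρH : ℝ)
    (hd : 0 < d) (hσ2 : 0 < σ2) (hτB : 0 < τB) (hτH : 0 < τH) (hδ : 0 < δ)
    (hβ : 0 < β) (hμ : 0 < μ) (hϱ0 : 0 < ϱ) (hϱ1 : ϱ < 1)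
    (hω0 : 0 < ω) (hω1 : ω < 1) (hρB : 0 < ρB) (hρH : 0 < ρH)
    (a b : ℝ) (hab : a = ρB / (β * ϱ)) (hbb : b = ρH / (ω * β)) :
    (P {x | X x ≤ b}).toReal *
          (P {x | δ * X x * (1 - ϱ) * h x / (d ^ μ * σ2) > τB ∧
                  β * ϱ * X x > ρB}).toReal +
        (P {x | X x > b}).toReal *
          (P {x | ((ω * β * X x - ρH) / (1 - ω)) * ht x * d ^ (-μ) / σ2 > τH ∧
                  ω * β * X x > ρH}).toReal =
      erfc (c / (2 * Real.sqrt b)) *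
          (∫ ρ in Ioi a,
            Real.exp (-(lam * τB * d ^ μ * σ2 / (δ * ρ * (1 - ϱ)))) * levyDensity c ρ) +
        (1 - erfc (c / (2 * Real.sqrt b))) *
          (∫ ρ in Ioi b,
            Real.exp (-(lam * τH * d ^ μ * σ2 * (1 - ω) / (ω * β * ρ - ρH))) *
              levyDensity c ρ) := by
  have ha_pos : 0 < a := by rw [hab]; positivity
  have hb_pos : 0 < b := by rw [hbb]; positivity
  have hp : (0:ℝ) < d ^ μ := Real.rpow_pos_of_pos hd μ
  have h1ϱ : (0:ℝ) < 1 - ϱ := by linarith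
  have h1ω : (0:ℝ) < 1 - ω := by linarith
  have hiXh : IndepFun X h P := by
    simpa using hind.indepFun (show (0 : Fin 3) ≠ 1 by decide)
  have hiXht : IndepFun X ht P := by
    simpa using hind.indepFun (show (0 : Fin 3) ≠ 2 by decide)
  -- first event
  set sB : ℝ → ℝ := fun ρ => τB * d ^ μ * σ2 / (δ * ρ * (1 - ϱ)) with hsB
  have hsBm : Measurable sB := by unfold sB; fun_prop
  have hsB0 : ∀ ρ, a < ρ → 0 ≤ sB ρ := by
    intro ρ hρ
    have hρ0 : 0 < ρ := lt_trans ha_pos hρ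
    unfold sB
    positivity
  have hE1 : {x | δ * X x * (1 - ϱ) * h x / (d ^ μ * σ2) > τB ∧ β * ϱ * X x > ρB}
      = {x | a < X x ∧ sB (X x) < h x} := by
    ext x
    simp only [mem_setOf_eq, gt_iff_lt]
    have hA : ρB < β * ϱ * X x ↔ a < X x := by
      rw [hab, div_lt_iff₀ (mul_pos hβ hϱ0)]
      constructor <;> intro h' <;> nlinarith
    constructor
    · rintro ⟨h1, h2⟩
      have hρ : a < X x := hA.mp h2
      have hρ0 : 0 < X x := lt_trans ha_pos hρ
      refine ⟨hρ, ?_⟩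
      rw [hsB, div_lt_iff₀ (by positivity : (0:ℝ) < δ * X x * (1 - ϱ))]
      rw [lt_div_iff₀ (by positivity : (0:ℝ) < d ^ μ * σ2)] at h1
      nlinarith
    · rintro ⟨hρ, h1⟩
      have hρ0 : 0 < X x := lt_trans ha_pos hρ
      refine ⟨?_, hA.mpr hρ⟩
      rw [lt_div_iff₀ (by positivity : (0:ℝ) < d ^ μ * σ2)]
      rw [hsB, div_lt_iff₀ (by positivity : (0:ℝ) < δ * X x * (1 - ϱ))] at h1
      nlinarith
  -- second event
  set sH : ℝ → ℝ := fun ρ => τH * d ^ μ * σ2 * (1 - ω) / (ω * β * ρ - ρH) with hsH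
  have hsHm : Measurable sH := by unfold sH; fun_prop
  have hM : ∀ ρ : ℝ, b < ρ → 0 < ω * β * ρ - ρH := by
    intro ρ hρ
    rw [hbb, div_lt_iff₀ (mul_pos hω0 hβ)] at hρ
    nlinarith
  have hsH0 : ∀ ρ, b < ρ → 0 ≤ sH ρ := by
    intro ρ hρ
    have := hM ρ hρ
    unfold sH
    positivity
  have he : d ^ (-μ) = (d ^ μ)⁻¹ := Real.rpow_neg hd.le μ
  have hE2 : {x | ((ω * β * X x - ρH) / (1 - ω)) * ht x * d ^ (-μ) / σ2 > τH ∧ ω * β * X x > ρH}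
      = {x | b < X x ∧ sH (X x) < ht x} := by
    ext x
    simp only [mem_setOf_eq, gt_iff_lt]
    have hA : ρH < ω * β * X x ↔ b < X x := by
      rw [hbb, div_lt_iff₀ (mul_pos hω0 hβ)]
      constructor <;> intro h' <;> nlinarith
    constructor
    · rintro ⟨h1, h2⟩
      have hρ : b < X x := hA.mp h2
      have hM' := hM _ hρ
      refine ⟨hρ, ?_⟩
      rw [hsH, div_lt_iff₀ hM']
      rw [lt_div_iff₀ hσ2, he] at h1
      rw [show (ω * β * X x - ρH) / (1 - ω) * ht x * (d ^ μ)⁻¹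
          = ht x * (ω * β * X x - ρH) * ((d ^ μ)⁻¹ / (1 - ω)) from by ring] at h1
      have hone : ((d ^ μ)⁻¹ / (1 - ω)) * (d ^ μ * (1 - ω)) = 1 := by field_simp
      have h1' := mul_lt_mul_of_pos_right h1 (by positivity : (0:ℝ) < d ^ μ * (1 - ω))
      rw [mul_assoc (ht x * (ω * β * X x - ρH)), hone, mul_one] at h1'
      linarith
    · rintro ⟨hρ, h1⟩
      have hM' := hM _ hρ
      refine ⟨?_, hA.mpr hρ⟩
      rw [lt_div_iff₀ hσ2, he]
      rw [hsH, div_lt_iff₀ hM'] at h1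
      rw [show (ω * β * X x - ρH) / (1 - ω) * ht x * (d ^ μ)⁻¹
          = (ht x * (ω * β * X x - ρH)) * ((d ^ μ)⁻¹ / (1 - ω)) from by ring]
      have h2 : τH * σ2 = (τH * d ^ μ * σ2 * (1 - ω)) * ((d ^ μ)⁻¹ / (1 - ω)) := by
        field_simp
      rw [h2]
      have hpos : 0 < (d ^ μ)⁻¹ / (1 - ω) := by positivity
      exact mul_lt_mul_of_pos_right h1 hpos
  rw [hE1, hE2,
    prob_event_eq P hc hlam X h hXm hhm hXlaw hhlaw hiXh a ha_pos.le sB hsBm hsB0,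
    prob_event_eq P hc hlam X ht hXm hhtm hXlaw hhtlaw hiXht b hb_pos.le sH hsHm hsH0,
    prob_Iic P hc X hXm hXlaw hb_pos, prob_gt P X hXm b,
    prob_Iic P hc X hXm hXlaw hb_pos]
  congr 2
  · refine setIntegral_congr_fun measurableSet_Ioi fun ρ hρ => ?_
    rw [hsB, show lam * (τB * d ^ μ * σ2 / (δ * ρ * (1 - ϱ)))
      = lam * τB * d ^ μ * σ2 / (δ * ρ * (1 - ϱ)) from by ring]
  · refine setIntegral_congr_fun measurableSet_Ioi fun ρ hρ => ?_
    rw [hsH, show lam * (τH * d ^ μ * σ2 * (1 - ω) / (ω * β * ρ - ρH))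
      = lam * τH * d ^ μ * σ2 * (1 - ω) / (ω * β * ρ - ρH) from by ring]
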